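/- arXiv:2312.00893 — 2 statements merged into one kernel-verified Lean document; each statement's English description precedes it below -/
import Mathlib

section
/- Let X be an infinite, coarsely connected space. Then every element of ℂ_u[X] acts as a bounded operator on ℓ²(X) by matrix multiplication, yielding the natural representation λ : ℂ_u[X] → B(ℓ²(X)), and λ has no nonzero invariant vectors: if ξ ∈ ℓ²(X) satisfies λ(v)ξ = λ(vv*)ξ for every partial translation v, then ξ = 0. -/
open scoped ENNReal Classical

noncomputable section

namespace GeomPropT

variable {X : Type*}

/-- The tube of diameter `R` in `X × X`. -/
def Tube (X : Type*) [EMetricSpace X] (R : ℝ≥0∞) : Set (X × X) :=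
  {p : X × X | edist p.1 p.2 ≤ R}

/-- A subset of `X × X` is controlled if it is contained in a tube of finite diameter. -/
def Controlled [EMetricSpace X] (E : Set (X × X)) : Prop :=
  ∃ R : ℝ≥0∞, R < ⊤ ∧ E ⊆ Tube X R

/-- `X` has bounded geometry if balls of any given finite radius have uniformly
bounded cardinality. -/
def BoundedGeometry (X : Type*) [EMetricSpace X] : Prop :=
  ∀ R : ℝ≥0∞, R < ⊤ → ∃ N : ℕ, ∀ x : X,
    {y : X | edist x y ≤ R}.Finite ∧ {y : X | edist x y ≤ R}.ncard ≤ N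

/-- Composition of subsets of `X × X`. -/
def compRel (E F : Set (X × X)) : Set (X × X) :=
  {p : X × X | ∃ z : X, (p.1, z) ∈ E ∧ (z, p.2) ∈ F}

/-- `compPow E n` is the `(n+1)`-fold composition `E^{∘(n+1)}`. -/
def compPow (E : Set (X × X)) : ℕ → Set (X × X)
  | 0 => E
  | n + 1 => compRel E (compPow E n)

/-- A controlled set is generating if every controlled set is contained in some
iterated composition of it. -/
def Generating [EMetricSpace X] (E : Set (X × X)) : Prop :=
  Controlled E ∧ ∀ F : Set (X × X), Controlled F → ∃ n : ℕ, F ⊆ compPow E n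

/-- `X` is monogenic if it admits a controlled generating set. -/
def Monogenic (X : Type*) [EMetricSpace X] : Prop :=
  ∃ E : Set (X × X), Generating E

/-- A "space": bounded geometry, monogenic, with at most countably many coarse
components. -/
structure IsSpace (X : Type*) [EMetricSpace X] : Prop where
  boundedGeometry : BoundedGeometry X
  monogenic : Monogenic X
  countableComponents : Set.Countable {C : Set X | ∃ x : X, C = {y : X | edist x y < ⊤}}

/-- The support of a matrix. -/
def matSupport (T : X → X → ℂ) : Set (X × X) := {p : X × X | T p.1 p.2 ≠ 0}

/-- Membership in `ℂ_u[X]`: uniformly bounded entries and controlled support. -/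
def CuElem [EMetricSpace X] (T : X → X → ℂ) : Prop :=
  (∃ M : ℝ, ∀ x y : X, ‖T x y‖ ≤ M) ∧ Controlled (matSupport T)

/-- The identity matrix. -/
def matOne : X → X → ℂ := fun x y => if x = y then 1 else 0

/-- Matrix multiplication. -/
def matMul (T S : X → X → ℂ) : X → X → ℂ := fun x y => ∑' z : X, T x z * S z y

/-- Matrix adjoint. -/
def matStar (T : X → X → ℂ) : X → X → ℂ := fun x y => starRingEnd ℂ (T y x)

/-- Matrix powers. -/
def matPow (A : X → X → ℂ) : ℕ → X → X → ℂ
  | 0 => matOne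
  | n + 1 => matMul A (matPow A n)

/-- A function `f ∈ ℓ∞(X)` viewed as a diagonal matrix. -/
def diag (f : X → ℂ) : X → X → ℂ := fun x y => if x = y then f x else 0

/-- The matrix of a partial translation: a `{0,1}`-matrix with at most one `1` in
each row and each column, and controlled support. -/
def IsPartialTranslation [EMetricSpace X] (v : X → X → ℂ) : Prop :=
  (∀ x y : X, v x y = 0 ∨ v x y = 1) ∧
  (∀ x y y' : X, v x y = 1 → v x y' = 1 → y = y') ∧
  (∀ x x' y : X, v x y = 1 → v x' y = 1 → x = x') ∧
  Controlled (matSupport v)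

/-- Membership in `S_X`: finite propagation permutation matrices. -/
def IsPermMatrix [EMetricSpace X] (A : X → X → ℂ) : Prop :=
  (∀ x y : X, A x y = 0 ∨ A x y = 1) ∧
  (∀ x : X, ∃! y : X, A x y = 1) ∧
  (∀ y : X, ∃! x : X, A x y = 1) ∧
  Controlled (matSupport A)

/-- Membership in `A_X` with common row/column sum `c`. -/
def MemAX [EMetricSpace X] (A : X → X → ℂ) (c : ℂ) : Prop :=
  CuElem A ∧ ∀ x : X, HasSum (fun y => A x y) c ∧ HasSum (fun y => A y x) c

variable {H : Type*} [NormedAddCommGroup H] [InnerProductSpace ℂ H]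

/-- A representation of `ℂ_u[X]`: a unital `*`-homomorphism into `B(H)`. -/
structure IsRepresentation [EMetricSpace X] [CompleteSpace H]
    (π : (X → X → ℂ) → (H →L[ℂ] H)) : Prop where
  map_one : π matOne = 1
  map_add : ∀ T S : X → X → ℂ, CuElem T → CuElem S → π (T + S) = π T + π S
  map_smul : ∀ (c : ℂ) (T : X → X → ℂ), CuElem T → π (c • T) = c • π T
  map_mul : ∀ T S : X → X → ℂ, CuElem T → CuElem S → π (matMul T S) = π T * π S
  map_star : ∀ T : X → X → ℂ, CuElem T → π (matStar T) = ContinuousLinearMap.adjoint (π T)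

/-- The subspace `H^π` of invariant vectors. -/
def invariantSubmodule [EMetricSpace X] (π : (X → X → ℂ) → (H →L[ℂ] H)) :
    Submodule ℂ H where
  carrier := {ξ : H | ∀ v : X → X → ℂ, IsPartialTranslation v →
    π v ξ = π (matMul v (matStar v)) ξ}
  add_mem' := by
    intro a b ha hb v hv
    simp only [map_add, ha v hv, hb v hv]
  zero_mem' := by
    intro v hv
    simp
  smul_mem' := by
    intro c ξ hξ v hv
    simp only [map_smul, hξ v hv]

/-- `p` is the orthogonal projection onto `S`. -/
def IsOrthoProjOnto (p : H →L[ℂ] H) (S : Submodule ℂ H) : Prop :=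
  ∀ ξ : H, p ξ ∈ S ∧ ξ - p ξ ∈ Sᗮ

/-- Geometric Property (T). -/
def HasPropertyT (X : Type*) [EMetricSpace X] : Prop :=
  ∀ E : Set (X × X), Generating E →
    ∃ c : ℝ, 0 < c ∧
      ∀ (H : Type) [NormedAddCommGroup H] [InnerProductSpace ℂ H] [CompleteSpace H]
        (π : (X → X → ℂ) → (H →L[ℂ] H)), IsRepresentation π →
        ∀ ξ ∈ (invariantSubmodule π)ᗮ,
          ∃ v : X → X → ℂ, IsPartialTranslation v ∧ matSupport v ⊆ E ∧
            c * ‖ξ‖ ≤ ‖π v ξ - π (matMul v (matStar v)) ξ‖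

/-- Bounded functions (elements of `ℓ∞(X)`). -/
def BddFun (f : X → ℂ) : Prop := ∃ M : ℝ, ∀ x : X, ‖f x‖ ≤ M

/-- `f ∘ t`, extended by `0`, where `t` is the partial translation with matrix `v`. -/
def translateFun (v : X → X → ℂ) (f : X → ℂ) : X → ℂ := fun y => ∑' x : X, v x y * f x

/-- An invariant mean on `ℓ∞(X)`: a positive unital linear functional invariant
under partial translations. -/
def IsInvariantMean [EMetricSpace X] (φ : (X → ℂ) → ℂ) : Prop :=
  (∀ f g : X → ℂ, BddFun f → BddFun g → φ (f + g) = φ f + φ g) ∧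
  (∀ (c : ℂ) (f : X → ℂ), BddFun f → φ (c • f) = c * φ f) ∧
  φ (fun _ => 1) = 1 ∧
  (∀ f : X → ℂ, BddFun f → (∀ x, 0 ≤ (f x).re ∧ (f x).im = 0) →
    0 ≤ (φ f).re ∧ (φ f).im = 0) ∧
  (∀ f : X → ℂ, BddFun f → ∀ v : X → X → ℂ, IsPartialTranslation v →
    (∀ x : X, f x ≠ 0 → ∃ y : X, v x y = 1) → φ (translateFun v f) = φ f)

/-- `X` is amenable if `ℓ∞(X)` admits an invariant mean. -/
def IsAmenable (X : Type*) [EMetricSpace X] : Prop :=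
  ∃ φ : (X → ℂ) → ℂ, IsInvariantMean φ

/-- A representation of `ℂ_u[X]` bundled with its Hilbert space. -/
structure HilbertRep (X : Type*) [EMetricSpace X] where
  H : Type
  [nacg : NormedAddCommGroup H]
  [ips : InnerProductSpace ℂ H]
  [cs : CompleteSpace H]
  π : (X → X → ℂ) → (H →L[ℂ] H)
  rep : IsRepresentation π

attribute [instance] HilbertRep.nacg HilbertRep.ips HilbertRep.cs

open scoped NNReal in
/-- On an infinite coarsely connected space, every element of
`ℂ_u[X]` acts boundedly on `ℓ²(X)` by matrix multiplication, and this natural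
representation has no nonzero invariant vectors. -/
theorem statement16 {X : Type*} [EMetricSpace X] [Infinite X] (hX : IsSpace X)
    (hcc : ∀ x y : X, edist x y < ⊤) :
    (∀ T : X → X → ℂ, CuElem T → ∃ C : ℝ, 0 ≤ C ∧
      ∀ ξ : lp (fun _ : X => ℂ) 2, ∃ η : lp (fun _ : X => ℂ) 2,
        (∀ x : X, η x = ∑' y : X, T x y * ξ y) ∧ ‖η‖ ≤ C * ‖ξ‖) ∧
    (∀ ξ : lp (fun _ : X => ℂ) 2,
      (∀ v : X → X → ℂ, IsPartialTranslation v →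
        ∀ x : X, ∑' y : X, v x y * ξ y = ∑' y : X, matMul v (matStar v) x y * ξ y) →
      ξ = 0) := by
  have hNE : Nonempty X := inferInstance
  obtain ⟨x₀⟩ := hNE
  constructor
  · -- Part 1: boundedness
    rintro T ⟨⟨M, hM⟩, R, hR, hTube⟩
    have hnormM : ∀ x y : X, ‖T x y‖ ≤ M := by
      intro x y; simpa using hM x y
    have hM0 : 0 ≤ M := le_trans (norm_nonneg _) (hnormM x₀ x₀)
    obtain ⟨N, hN⟩ := hX.boundedGeometry R hR
    have hrow : ∀ x : X, {y | T x y ≠ 0}.Finite ∧ {y | T x y ≠ 0}.ncard ≤ N := by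
      intro x
      have hsub : {y | T x y ≠ 0} ⊆ {y | edist x y ≤ R} := fun y hy =>
        hTube (show ((x, y) : X × X) ∈ matSupport T from hy)
      exact ⟨(hN x).1.subset hsub,
        le_trans (Set.ncard_le_ncard hsub (hN x).1) (hN x).2⟩
    have hcol : ∀ y : X, {x | T x y ≠ 0}.Finite ∧ {x | T x y ≠ 0}.ncard ≤ N := by
      intro y
      have hsub : {x | T x y ≠ 0} ⊆ {x | edist y x ≤ R} := by
        intro x hx
        have h1 : edist x y ≤ R := hTube (show ((x, y) : X × X) ∈ matSupport T from hx)
        simpa [edist_comm] using h1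
      exact ⟨(hN y).1.subset hsub,
        le_trans (Set.ncard_le_ncard hsub (hN y).1) (hN y).2⟩
    set F : X → Finset X := fun x => (hrow x).1.toFinset with hF
    have hFmem : ∀ x y : X, y ∈ F x ↔ T x y ≠ 0 := by
      intro x y; simp [hF, Set.Finite.mem_toFinset]
    have hFcard : ∀ x : X, (F x).card ≤ N := by
      intro x
      have := Set.ncard_eq_toFinset_card _ (hrow x).1
      rw [hF]; rw [← this]; exact (hrow x).2
    set G : X → Finset X := fun y => (hcol y).1.toFinset with hG
    have hGmem : ∀ y x : X, x ∈ G y ↔ T x y ≠ 0 := by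
      intro y x; simp [hG, Set.Finite.mem_toFinset]
    have hGcard : ∀ y : X, (G y).card ≤ N := by
      intro y
      have := Set.ncard_eq_toFinset_card _ (hcol y).1
      rw [hG]; rw [← this]; exact (hcol y).2
    refine ⟨N * M, by positivity, ?_⟩
    intro ξ
    set η₀ : X → ℂ := fun x => ∑' y, T x y * ξ y with hη₀
    have heq : ∀ x : X, η₀ x = ∑ y ∈ F x, T x y * ξ y := by
      intro x
      refine tsum_eq_sum ?_
      intro y hy
      have : T x y = 0 := by
        by_contra h; exact hy ((hFmem x y).mpr h)
      simp [this]
    -- pointwise bound in ℝ≥0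
    set M' : ℝ≥0 := M.toNNReal with hM'
    have hTle : ∀ x y : X, ‖T x y‖₊ ≤ M' := by
      intro x y
      rw [hM', ← norm_toNNReal]
      exact Real.toNNReal_mono (hnormM x y)
    have hkey : ∀ x : X, (‖η₀ x‖₊ : ℝ≥0) ^ 2
        ≤ (N : ℝ≥0) * M' ^ 2 * ∑ y ∈ F x, ‖ξ y‖₊ ^ 2 := by
      intro x
      have h1 : ‖η₀ x‖₊ ≤ ∑ y ∈ F x, ‖T x y * ξ y‖₊ := by
        rw [heq x]; exact nnnorm_sum_le _ _
      calc (‖η₀ x‖₊ : ℝ≥0) ^ 2 ≤ (∑ y ∈ F x, ‖T x y * ξ y‖₊) ^ 2 := by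
            exact pow_le_pow_left₀ zero_le h1 2
        _ ≤ ((F x).card : ℝ≥0) * ∑ y ∈ F x, ‖T x y * ξ y‖₊ ^ 2 :=
            sq_sum_le_card_mul_sum_sq
        _ ≤ (N : ℝ≥0) * ∑ y ∈ F x, M' ^ 2 * ‖ξ y‖₊ ^ 2 := by
            refine mul_le_mul ?_ ?_ zero_le zero_le
            · exact_mod_cast hFcard x
            · refine Finset.sum_le_sum fun y _ => ?_
              rw [nnnorm_mul, mul_pow]
              exact mul_le_mul_of_nonneg_right (pow_le_pow_left₀ zero_le (hTle x y) 2)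
                zero_le
        _ = (N : ℝ≥0) * M' ^ 2 * ∑ y ∈ F x, ‖ξ y‖₊ ^ 2 := by
            rw [← Finset.mul_sum, mul_assoc]
    -- summability of ξ squares
    have hp2 : (0:ℝ) < (2 : ℝ≥0∞).toReal := by norm_num
    have hsξ' : Summable fun y : X => ‖ξ y‖ ^ (2 : ℝ≥0∞).toReal := (lp.memℓp ξ).summable hp2
    have hsξ : Summable fun y : X => (‖ξ y‖₊ : ℝ≥0) ^ 2 := by
      rw [← NNReal.summable_coe]
      convert hsξ' using 2 with y
      push_cast
      rw [show ((2:ℝ≥0∞)).toReal = (2:ℝ) by norm_num, Real.rpow_two]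
    set b : X → ℝ≥0∞ := fun y => (‖ξ y‖₊ : ℝ≥0∞) ^ 2 with hb
    set Bnn : ℝ≥0 := ∑' y, (‖ξ y‖₊ : ℝ≥0) ^ 2 with hBnn
    have hB : (∑' y, b y) = (Bnn : ℝ≥0∞) := by
      rw [hBnn, ENNReal.coe_tsum hsξ]
      simp [hb]
    -- main ENNReal estimate
    have hmain : (∑' x, (‖η₀ x‖₊ : ℝ≥0∞) ^ 2)
        ≤ ((N : ℝ≥0∞) * (M' : ℝ≥0∞)) ^ 2 * (Bnn : ℝ≥0∞) := by
      have step1 : (∑' x, (‖η₀ x‖₊ : ℝ≥0∞) ^ 2)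
          ≤ ∑' x, (N : ℝ≥0∞) * (M' : ℝ≥0∞) ^ 2 * ∑ y ∈ F x, b y := by
        refine ENNReal.tsum_le_tsum fun x => ?_
        have := hkey x
        calc (‖η₀ x‖₊ : ℝ≥0∞) ^ 2
            = ((‖η₀ x‖₊ ^ 2 : ℝ≥0) : ℝ≥0∞) := by push_cast; ring
          _ ≤ (((N : ℝ≥0) * M' ^ 2 * ∑ y ∈ F x, ‖ξ y‖₊ ^ 2 : ℝ≥0) : ℝ≥0∞) :=
              ENNReal.coe_le_coe.mpr this
          _ = (N : ℝ≥0∞) * (M' : ℝ≥0∞) ^ 2 * ∑ y ∈ F x, b y := by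
              push_cast [hb]; ring_nf
      have step2 : ∀ x : X, (∑ y ∈ F x, b y)
          = ∑' y, (if T x y ≠ 0 then b y else 0) := by
        intro x
        rw [tsum_eq_sum (s := F x) (fun y hy => by
          simp only [hFmem] at hy; simp [not_not.mp (fun h => hy h)])]
        refine (Finset.sum_congr rfl fun y hy => ?_).symm
        rw [if_pos ((hFmem x y).mp hy)]
      have step4 : ∀ y : X, (∑' x, (if T x y ≠ 0 then b y else 0)) ≤ (N : ℝ≥0∞) * b y := by
        intro y
        rw [tsum_eq_sum (s := G y) (fun x hx => by
          simp only [hGmem] at hx; simp [not_not.mp (fun h => hx h)])]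
        calc (∑ x ∈ G y, (if T x y ≠ 0 then b y else 0))
            ≤ ∑ _x ∈ G y, b y := Finset.sum_le_sum fun x _ => by split <;> simp
          _ = ((G y).card : ℝ≥0∞) * b y := by rw [Finset.sum_const, nsmul_eq_mul]
          _ ≤ (N : ℝ≥0∞) * b y := by
              exact mul_le_mul_left (by exact_mod_cast hGcard y) _
      calc (∑' x, (‖η₀ x‖₊ : ℝ≥0∞) ^ 2)
          ≤ ∑' x, (N : ℝ≥0∞) * (M' : ℝ≥0∞) ^ 2 * ∑ y ∈ F x, b y := step1
        _ = (N : ℝ≥0∞) * (M' : ℝ≥0∞) ^ 2 * ∑' x, ∑ y ∈ F x, b y := ENNReal.tsum_mul_left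
        _ = (N : ℝ≥0∞) * (M' : ℝ≥0∞) ^ 2
            * ∑' y, ∑' x, (if T x y ≠ 0 then b y else 0) := by
            rw [show (∑' x, ∑ y ∈ F x, b y)
                = ∑' x, ∑' y, (if T x y ≠ 0 then b y else 0) from
              tsum_congr fun x => step2 x, ENNReal.tsum_comm]
        _ ≤ (N : ℝ≥0∞) * (M' : ℝ≥0∞) ^ 2 * ∑' y, (N : ℝ≥0∞) * b y := by
            exact mul_le_mul_right (ENNReal.tsum_le_tsum step4) _
        _ = ((N : ℝ≥0∞) * (M' : ℝ≥0∞)) ^ 2 * ∑' y, b y := by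
            rw [ENNReal.tsum_mul_left]; ring
        _ = ((N : ℝ≥0∞) * (M' : ℝ≥0∞)) ^ 2 * (Bnn : ℝ≥0∞) := by rw [hB]
    have hfin : (∑' x, (‖η₀ x‖₊ : ℝ≥0∞) ^ 2) ≠ ⊤ := by
      refine ne_top_of_le_ne_top ?_ hmain
      rw [show ((N : ℝ≥0∞) * (M' : ℝ≥0∞)) ^ 2 * (Bnn : ℝ≥0∞)
          = ((((N : ℝ≥0) * M') ^ 2 * Bnn : ℝ≥0) : ℝ≥0∞) by push_cast; ring]
      exact ENNReal.coe_ne_top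
    have hsη : Summable fun x : X => (‖η₀ x‖₊ : ℝ≥0) ^ 2 := by
      rw [← ENNReal.tsum_coe_ne_top_iff_summable]
      have hc : (∑' x, (((‖η₀ x‖₊ : ℝ≥0) ^ 2 : ℝ≥0) : ℝ≥0∞))
          = ∑' x, (‖η₀ x‖₊ : ℝ≥0∞) ^ 2 := tsum_congr fun x => by push_cast; ring
      rw [hc]; exact hfin
    have hmem : Memℓp η₀ 2 := by
      apply memℓp_gen
      have := NNReal.summable_coe.mpr hsη
      convert this using 2 with x
      push_cast
      rw [show ((2:ℝ≥0∞)).toReal = (2:ℝ) by norm_num, Real.rpow_two]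
    refine ⟨⟨η₀, hmem⟩, fun x => rfl, ?_⟩
    -- norm estimate
    have htsum_nn : (∑' x, (‖η₀ x‖₊ : ℝ≥0) ^ 2) ≤ ((N : ℝ≥0) * M') ^ 2 * Bnn := by
      have h1 : ((∑' x, (‖η₀ x‖₊ : ℝ≥0) ^ 2 : ℝ≥0) : ℝ≥0∞)
          ≤ ((((N : ℝ≥0) * M') ^ 2 * Bnn : ℝ≥0) : ℝ≥0∞) := by
        rw [ENNReal.coe_tsum hsη]
        calc (∑' x, ((‖η₀ x‖₊ ^ 2 : ℝ≥0) : ℝ≥0∞))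
            = ∑' x, (‖η₀ x‖₊ : ℝ≥0∞) ^ 2 := by
              refine tsum_congr fun x => ?_; push_cast; ring
          _ ≤ ((N : ℝ≥0∞) * (M' : ℝ≥0∞)) ^ 2 * (Bnn : ℝ≥0∞) := hmain
          _ = ((((N : ℝ≥0) * M') ^ 2 * Bnn : ℝ≥0) : ℝ≥0∞) := by push_cast; ring
      exact_mod_cast h1
    refine lp.norm_le_of_tsum_le hp2 (by positivity) ?_
    have hnormξ : ‖ξ‖ ^ (2 : ℝ≥0∞).toReal = (Bnn : ℝ) := by
      rw [lp.norm_rpow_eq_tsum hp2 ξ, hBnn]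
      rw [NNReal.coe_tsum]
      refine tsum_congr fun y => ?_
      push_cast
      rw [show ((2:ℝ≥0∞)).toReal = (2:ℝ) by norm_num, Real.rpow_two]
    have hco : (∑' x, ‖η₀ x‖ ^ (2 : ℝ≥0∞).toReal)
        = ((∑' x, (‖η₀ x‖₊ : ℝ≥0) ^ 2 : ℝ≥0) : ℝ) := by
      rw [NNReal.coe_tsum]
      refine tsum_congr fun x => ?_
      push_cast
      rw [show ((2:ℝ≥0∞)).toReal = (2:ℝ) by norm_num, Real.rpow_two]
    have hξ2 : ‖ξ‖ ^ 2 = (Bnn : ℝ) := by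
      rw [← hnormξ, show ((2:ℝ≥0∞)).toReal = (2:ℝ) by norm_num, Real.rpow_two]
    have hRHS : ((N : ℝ) * M * ‖ξ‖) ^ (2 : ℝ≥0∞).toReal
        = ((N : ℝ) * M) ^ 2 * (Bnn : ℝ) := by
      rw [show ((2:ℝ≥0∞)).toReal = (2:ℝ) by norm_num, Real.rpow_two, mul_pow, hξ2]
    rw [hco, hRHS]
    calc ((∑' x, (‖η₀ x‖₊ : ℝ≥0) ^ 2 : ℝ≥0) : ℝ)
        ≤ ((((N : ℝ≥0) * M') ^ 2 * Bnn : ℝ≥0) : ℝ) := by exact_mod_cast htsum_nn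
      _ = ((N : ℝ) * M) ^ 2 * (Bnn : ℝ) := by
          push_cast [hM', Real.coe_toNNReal M hM0]; ring
  · -- Part 2: no nonzero invariant vectors
    intro ξ hξ
    have key : ∀ p q : X, ξ p = ξ q := by
      intro p q
      set v : X → X → ℂ := fun a b => if a = q ∧ b = p then 1 else 0 with hv
      have hone : ∀ a b : X, v a b = 1 → a = q ∧ b = p := by
        intro a b h
        by_contra hc
        rw [hv] at h; simp only [if_neg hc] at h
        exact zero_ne_one h
      have hpt : IsPartialTranslation v := by
        refine ⟨?_, ?_, ?_, edist q p, hcc q p, ?_⟩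
        · intro a b
          by_cases h : a = q ∧ b = p <;> simp [hv, h]
        · intro a y y' h1 h2
          rw [(hone a y h1).2, (hone a y' h2).2]
        · intro a a' y h1 h2
          rw [(hone a y h1).1, (hone a' y h2).1]
        · rintro ⟨a, b⟩ hab
          have h : a = q ∧ b = p := by
            by_contra hc
            apply hab
            show v a b = 0
            rw [hv]; simp [if_neg hc]
          rcases h with ⟨rfl, rfl⟩
          simp [Tube]
      have h := hξ v hpt q
      have hLHS : (∑' y, v q y * ξ y) = ξ p := by
        rw [tsum_eq_single p (fun b hb => by
          rw [hv]; simp only; rw [if_neg (by tauto), zero_mul])]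
        rw [hv]; simp
      have hmm : ∀ b : X, matMul v (matStar v) q b = if b = q then 1 else 0 := by
        intro b
        show (∑' z, v q z * matStar v z b) = _
        rw [tsum_eq_single p (fun z hz => by
          rw [hv]; simp only; rw [if_neg (by tauto), zero_mul])]
        simp only [matStar, hv]
        by_cases hb : b = q <;> simp [hb]
      have hRHS : (∑' y, matMul v (matStar v) q y * ξ y) = ξ q := by
        rw [tsum_eq_single q (fun b hb => by rw [hmm b, if_neg hb, zero_mul])]
        rw [hmm q, if_pos rfl, one_mul]
      rw [hLHS, hRHS] at h
      exact h
    -- ξ is constant, hence zero by square-summability on an infinite set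
    obtain ⟨y₀⟩ := (inferInstance : Nonempty X)
    have hp2 : (0:ℝ) < (2 : ℝ≥0∞).toReal := by norm_num
    have hsum : Summable fun x : X => ‖ξ x‖ ^ (2 : ℝ≥0∞).toReal := (lp.memℓp ξ).summable hp2
    have hconst : (fun x : X => ‖ξ x‖ ^ (2 : ℝ≥0∞).toReal)
        = fun _ : X => ‖ξ y₀‖ ^ (2 : ℝ≥0∞).toReal := by
      funext x; rw [key x y₀]
    rw [hconst] at hsum
    have hzero : ‖ξ y₀‖ ^ (2 : ℝ≥0∞).toReal = 0 := by
      have := hsum.tendsto_cofinite_zero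
      exact tendsto_const_nhds_iff.mp this
    have hξy₀ : ξ y₀ = 0 := by
      rw [show ((2:ℝ≥0∞)).toReal = (2:ℝ) by norm_num, Real.rpow_two] at hzero
      have : ‖ξ y₀‖ = 0 := by
        nlinarith [norm_nonneg (ξ y₀)]
      exact norm_eq_zero.mp this
    apply lp.ext
    funext x
    show ξ x = (0 : lp (fun _ : X => ℂ) 2) x
    rw [key x y₀, hξy₀]
    simp


end GeomPropT
end
end

section
/- Let X be a space, E ⊆ X×X a controlled set, and c > 0. Assume that for every representation π of ℂ_u[X] on a complex Hilbert space H and every ξ ∈ (H^π)^⊥ there is a partial translation v with supp(v) ⊆ E such that ‖π(v)ξ − π(vv*)ξ‖ ≥ c‖ξ‖. Then there exist an integer n ≥ 1 and matrices A_1, …, A_n ∈ S_X such that for every representation π of ℂ_u[X] on H and every ξ ∈ (H^π)^⊥, there is some j ∈ {1,…,n} with ‖π(A_j)ξ − ξ‖ ≥ (c/n)‖ξ‖. -/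
open scoped ENNReal Classical

noncomputable section

namespace GeomPropT

variable {X : Type*}

variable {H : Type*} [NormedAddCommGroup H] [InnerProductSpace ℂ H]

noncomputable def greedy {α : Type*} (f : α → ℕ) (nb : α → Finset α)
    (hnb : ∀ x, ∀ y ∈ nb x, f y < f x) (K : ℕ) (hK : 0 < K) : α → Fin K
  | x =>
    if h : (Finset.univ \ ((nb x).attach.image
        (fun y => greedy f nb hnb K hK y.1))).Nonempty then
      h.choose
    else ⟨0, hK⟩
termination_by x => f x
decreasing_by all_goals exact hnb _ y.1 y.2

lemma greedy_ne {α : Type*} (f : α → ℕ) (nb : α → Finset α)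
    (hnb : ∀ x, ∀ y ∈ nb x, f y < f x) (K : ℕ) (hK : 0 < K)
    (x : α) (hcard : (nb x).card < K) :
    ∀ y ∈ nb x, greedy f nb hnb K hK y ≠ greedy f nb hnb K hK x := by
  intro y hy
  have hs : (Finset.univ \ ((nb x).attach.image
      (fun y => greedy f nb hnb K hK y.1))).Nonempty := by
    rw [Finset.sdiff_nonempty]
    intro hsub
    have h2 := Finset.card_le_card hsub
    have h3 := Finset.card_image_le (s := (nb x).attach)
      (f := fun y => greedy f nb hnb K hK y.1)
    rw [Finset.card_attach] at h3
    rw [Finset.card_fin] at h2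
    omega
  have hx : greedy f nb hnb K hK x = hs.choose := by
    rw [greedy]
    simp only [dif_pos hs]
  have hmem := hs.choose_spec
  rw [Finset.mem_sdiff] at hmem
  intro heq
  apply hmem.2
  rw [Finset.mem_image]
  exact ⟨⟨y, hy⟩, Finset.mem_attach _ _, by rw [heq, ← hx]⟩



lemma countable_of_bg [EMetricSpace X] (hbg : BoundedGeometry X)
    (hcc : Set.Countable {C : Set X | ∃ x : X, C = {y : X | edist x y < ⊤}}) :
    Countable X := by
  rw [← Set.countable_univ_iff]
  have hsub : (Set.univ : Set X) ⊆ ⋃₀ {C : Set X | ∃ x : X, C = {y : X | edist x y < ⊤}} := by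
    intro x _
    exact ⟨{y | edist x y < ⊤}, ⟨x, rfl⟩, by simp⟩
  refine Set.Countable.mono hsub (Set.Countable.sUnion hcc ?_)
  rintro C ⟨x, rfl⟩
  have hsub2 : {y : X | edist x y < ⊤} ⊆ ⋃ n : ℕ, {y : X | edist x y ≤ n} := by
    intro y hy
    obtain ⟨n, hn⟩ := ENNReal.exists_nat_gt (ne_of_lt hy)
    exact Set.mem_iUnion.2 ⟨n, le_of_lt hn⟩
  refine Set.Countable.mono hsub2 (Set.countable_iUnion fun n => ?_)
  obtain ⟨N, hN⟩ := hbg n (by simp)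
  exact (hN x).1.countable

lemma exists_coloring [EMetricSpace X] (hbg : BoundedGeometry X) (hcnt : Countable X)
    (R : ℝ≥0∞) (hR : R < ⊤) :
    ∃ K : ℕ, 0 < K ∧ ∃ κ : X → Fin K, ∀ x y : X, x ≠ y → edist x y ≤ R → κ x ≠ κ y := by
  obtain ⟨N, hN⟩ := hbg R hR
  obtain ⟨g, hg⟩ := exists_injective_nat X
  set nbset : X → Set X := fun x => {y : X | y ≠ x ∧ edist x y ≤ R ∧ g y < g x} with hnbset
  have hfin : ∀ x, (nbset x).Finite := fun x =>
    (hN x).1.subset (fun y hy => hy.2.1)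
  set nb : X → Finset X := fun x => (hfin x).toFinset with hnb
  have hmem : ∀ x y, y ∈ nb x ↔ (y ≠ x ∧ edist x y ≤ R ∧ g y < g x) := by
    intro x y
    simp [hnb, Set.Finite.mem_toFinset, hnbset]
  have hdec : ∀ x, ∀ y ∈ nb x, g y < g x := fun x y hy => ((hmem x y).1 hy).2.2
  refine ⟨N + 1, Nat.succ_pos N, greedy g nb hdec (N+1) (Nat.succ_pos N), ?_⟩
  have hcard : ∀ x, (nb x).card < N + 1 := by
    intro x
    have h1 : (nbset x).ncard ≤ {y : X | edist x y ≤ R}.ncard :=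
      Set.ncard_le_ncard (fun y hy => hy.2.1) (hN x).1
    have h2 : (nbset x).ncard = (nb x).card := Set.ncard_eq_toFinset_card _ (hfin x)
    have := (hN x).2
    omega
  intro x y hxy hdist
  rcases lt_trichotomy (g x) (g y) with h | h | h
  · have : x ∈ nb y := (hmem y x).2 ⟨hxy, by rwa [edist_comm], h⟩
    exact (greedy_ne g nb hdec _ _ y (hcard y) x this)
  · exact absurd (hg h) hxy
  · have : y ∈ nb x := (hmem x y).2 ⟨(Ne.symm hxy), hdist, h⟩
    exact fun h => (greedy_ne g nb hdec _ _ x (hcard x) y this) h.symm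



section MatrixHelpers

lemma matMul_diag_apply (T : X → X → ℂ) (f : X → ℂ) (x y : X) :
    matMul T (diag f) x y = T x y * f y := by
  unfold matMul diag
  rw [tsum_eq_single y]
  · simp
  · intro z hz
    simp [hz]

lemma diag_matMul_diag (f g : X → ℂ) :
    matMul (diag f) (diag g) = diag (fun x => f x * g x) := by
  funext x y
  unfold matMul diag
  rw [tsum_eq_single x]
  · by_cases h : x = y <;> simp [h]
  · intro z hz
    simp [Ne.symm hz]

lemma matStar_diag (f : X → ℂ) (hf : ∀ x, starRingEnd ℂ (f x) = f x) :
    matStar (diag f) = diag f := by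
  funext x y
  unfold matStar diag
  by_cases h : x = y
  · subst h; simp [hf]
  · simp [h, Ne.symm h]

lemma matOne_eq_diag : (matOne : X → X → ℂ) = diag (fun _ => 1) := rfl

variable [EMetricSpace X]

lemma cuElem_diag {f : X → ℂ} (hf : ∀ x, ‖f x‖ ≤ 1) :
    CuElem (diag f) := by
  refine ⟨⟨1, fun x y => ?_⟩, ⟨0, by simp, fun p hp => ?_⟩⟩
  · unfold diag; split_ifs; exacts [hf x, by simp]
  · have hp' : diag f p.1 p.2 ≠ 0 := hp
    have h : p.1 = p.2 := by
      by_contra h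
      exact hp' (by simp [diag, h])
    simp [Tube, h]

lemma cuElem_zero : CuElem (0 : X → X → ℂ) :=
  ⟨⟨0, by simp⟩, 0, by simp, fun p hp => absurd rfl hp⟩

lemma cuElem_add {T S : X → X → ℂ} (hT : CuElem T) (hS : CuElem S) :
    CuElem (T + S) := by
  obtain ⟨⟨M1, hM1⟩, R1, hR1, hT2⟩ := hT
  obtain ⟨⟨M2, hM2⟩, R2, hR2, hS2⟩ := hS
  refine ⟨⟨M1 + M2, fun x y => ?_⟩, ⟨max R1 R2, max_lt hR1 hR2, fun p hp => ?_⟩⟩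
  · simp only [Pi.add_apply]
    exact (norm_add_le _ _).trans (add_le_add (hM1 x y) (hM2 x y))
  · have hp' : T p.1 p.2 + S p.1 p.2 ≠ 0 := hp
    have : T p.1 p.2 ≠ 0 ∨ S p.1 p.2 ≠ 0 := by
      by_contra h
      push_neg at h
      exact hp' (by rw [h.1, h.2, add_zero])
    show edist p.1 p.2 ≤ max R1 R2
    rcases this with h | h
    · exact le_trans (hT2 h : edist p.1 p.2 ≤ R1) (le_max_left _ _)
    · exact le_trans (hS2 h : edist p.1 p.2 ≤ R2) (le_max_right _ _)

lemma cuElem_sum {ι : Type*} (s : Finset ι) (T : ι → X → X → ℂ)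
    (hT : ∀ i ∈ s, CuElem (T i)) : CuElem (∑ i ∈ s, T i) := by
  induction s using Finset.cons_induction with
  | empty => simpa using cuElem_zero
  | cons a s ha ih =>
    rw [Finset.sum_cons]
    exact cuElem_add (hT a (Finset.mem_cons_self a s))
      (ih fun i hi => hT i (Finset.mem_cons_of_mem hi))

lemma cuElem_matStar {T : X → X → ℂ} (hT : CuElem T) : CuElem (matStar T) := by
  obtain ⟨⟨M, hM⟩, R, hR, hT2⟩ := hT
  refine ⟨⟨M, fun x y => ?_⟩, ⟨R, hR, fun p hp => ?_⟩⟩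
  · simpa [matStar] using hM y x
  · have hp' : starRingEnd ℂ (T p.2 p.1) ≠ 0 := hp
    have h : T p.2 p.1 ≠ 0 := fun h => hp' (by simp [h])
    have h2 : ((p.2, p.1) : X × X) ∈ matSupport T := h
    have := hT2 h2
    simpa [Tube, edist_comm] using this

end MatrixHelpers

section OperatorHelpers

variable [EMetricSpace X] [CompleteSpace H]
variable {π : (X → X → ℂ) → (H →L[ℂ] H)}

lemma pi_zero (hπ : IsRepresentation π) : π 0 = 0 := by
  have h := hπ.map_smul 0 0 cuElem_zero
  simpa using h

lemma pi_sum (hπ : IsRepresentation π) {ι : Type*} (s : Finset ι)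
    (T : ι → X → X → ℂ) (hT : ∀ i ∈ s, CuElem (T i)) :
    π (∑ i ∈ s, T i) = ∑ i ∈ s, π (T i) := by
  induction s using Finset.cons_induction with
  | empty => simpa using pi_zero hπ
  | cons a s ha ih =>
    rw [Finset.sum_cons, Finset.sum_cons,
      hπ.map_add _ _ (hT a (Finset.mem_cons_self a s))
        (cuElem_sum s T fun i hi => hT i (Finset.mem_cons_of_mem hi)),
      ih fun i hi => hT i (Finset.mem_cons_of_mem hi)]

lemma pi_isometry (hπ : IsRepresentation π) {A : X → X → ℂ} (hA : CuElem A)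
    (hA1 : matMul (matStar A) A = matOne) (ξ : H) : ‖π A ξ‖ = ‖ξ‖ := by
  have h1 : ContinuousLinearMap.adjoint (π A) * π A = 1 := by
    rw [← hπ.map_star A hA, ← hπ.map_mul _ _ (cuElem_matStar hA) hA, hA1, hπ.map_one]
  have hfix : ContinuousLinearMap.adjoint (π A) (π A ξ) = ξ := by
    have h2 := congrArg (fun (S : H →L[ℂ] H) => S ξ) h1
    simpa using h2
  have h3 : (inner ℂ ξ ξ : ℂ) = inner ℂ (π A ξ) (π A ξ) := by
    rw [← ContinuousLinearMap.adjoint_inner_left (π A) ξ (π A ξ), hfix]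
  rw [inner_self_eq_norm_sq_to_K, inner_self_eq_norm_sq_to_K] at h3
  have h4 : ‖ξ‖ ^ 2 = ‖π A ξ‖ ^ 2 := by exact_mod_cast h3
  rw [← Real.sqrt_sq (norm_nonneg (π A ξ)), ← Real.sqrt_sq (norm_nonneg ξ), h4.symm]

lemma pi_proj_norm_le (hπ : IsRepresentation π) {e : X → X → ℂ} (he : CuElem e)
    (he1 : matMul e e = e) (he2 : matStar e = e) (ξ : H) :
    ‖π e ξ‖ ≤ ‖ξ‖ := by
  set p := π e with hp
  have hadj : ContinuousLinearMap.adjoint p = p := by rw [hp, ← hπ.map_star e he, he2]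
  have hidem : p (p ξ) = p ξ := by
    have h := hπ.map_mul e e he he
    rw [he1] at h
    have h2 := congrArg (fun (S : H →L[ℂ] H) => S ξ) h
    simp only [ContinuousLinearMap.mul_apply] at h2
    exact h2.symm
  have h2 : (inner ℂ (p ξ) ξ : ℂ) = inner ℂ (p ξ) (p ξ) := by
    have h := ContinuousLinearMap.adjoint_inner_left p ξ (p ξ)
    rw [hadj, hidem] at h
    exact h
  have h3 : ‖p ξ‖ ^ 2 ≤ ‖p ξ‖ * ‖ξ‖ := by
    rw [← inner_self_eq_norm_sq (𝕜 := ℂ), ← h2]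
    exact le_trans (Complex.re_le_norm _)
      (by exact norm_inner_le_norm _ _)
  rcases eq_or_lt_of_le (norm_nonneg (p ξ)) with h0 | h0
  · rw [← h0]; exact norm_nonneg ξ
  · have := (mul_le_mul_iff_right₀ h0).1 (by nlinarith : ‖p ξ‖ * ‖p ξ‖ ≤ ‖p ξ‖ * ‖ξ‖)
    exact this

end OperatorHelpers

section Partner

variable [EMetricSpace X]
variable (E : Set (X × X)) {K : ℕ} (κ : X → Fin K)

/-- Symmetrization of `E`. -/
def EdgeRel (x y : X) : Prop := (x, y) ∈ E ∨ (y, x) ∈ E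

/-- `y` is an `(a,b)`-colored `E`-neighbor of `x`. -/
def Qrel (a b : Fin K) (x y : X) : Prop :=
  x ≠ y ∧ EdgeRel E x y ∧ ((κ x = a ∧ κ y = b) ∨ (κ x = b ∧ κ y = a))

/-- The unique `(a,b)`-colored neighbor of `x`, or `x` itself. -/
def partner (a b : Fin K) (x : X) : X :=
  if h : ∃ y, Qrel E κ a b x y then h.choose else x

/-- The permutation matrix swapping each point with its `(a,b)`-partner. -/
def permMat (a b : Fin K) : X → X → ℂ :=
  fun x y => if partner E κ a b y = x then 1 else 0

variable {E κ}
variable {R : ℝ≥0∞}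

lemma EdgeRel.edist_le (hER : E ⊆ Tube X R) {x y : X} (h : EdgeRel E x y) :
    edist x y ≤ R := by
  rcases h with h | h
  · exact hER h
  · rw [edist_comm]; exact hER h

lemma Qrel.symm {a b : Fin K} {x y : X} (h : Qrel E κ a b x y) : Qrel E κ a b y x := by
  obtain ⟨h1, h2, h3⟩ := h
  refine ⟨h1.symm, ?_, by tauto⟩
  rcases h2 with h | h
  · exact Or.inr h
  · exact Or.inl h

lemma Qrel.unique (hER : E ⊆ Tube X R)
    (hκ : ∀ x y : X, x ≠ y → edist x y ≤ R + R → κ x ≠ κ y)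
    {a b : Fin K} {x y y' : X} (h : Qrel E κ a b x y) (h' : Qrel E κ a b x y') :
    y = y' := by
  by_contra hne
  have hdist : edist y y' ≤ R + R :=
    le_trans (edist_triangle y x y')
      (add_le_add (edist_comm y x ▸ h.2.1.edist_le hER) (h'.2.1.edist_le hER))
  have hcol : κ y = κ y' := by
    rcases h.2.2 with ⟨h1, h2⟩ | ⟨h1, h2⟩ <;> rcases h'.2.2 with ⟨g1, g2⟩ | ⟨g1, g2⟩ <;>
      rw [h2, g2] <;> rw [← h1, ← g1]
  exact hκ y y' hne hdist hcol

lemma partner_eq (hER : E ⊆ Tube X R)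
    (hκ : ∀ x y : X, x ≠ y → edist x y ≤ R + R → κ x ≠ κ y)
    {a b : Fin K} {x y : X} (hQ : Qrel E κ a b x y) : partner E κ a b x = y := by
  unfold partner
  have h : ∃ y, Qrel E κ a b x y := ⟨y, hQ⟩
  rw [dif_pos h]
  exact Qrel.unique hER hκ h.choose_spec hQ

lemma partner_cases (a b : Fin K) (x : X) :
    partner E κ a b x = x ∨ Qrel E κ a b x (partner E κ a b x) := by
  unfold partner
  split_ifs with h
  · exact Or.inr h.choose_spec
  · exact Or.inl rfl

lemma partner_invol (hER : E ⊆ Tube X R)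
    (hκ : ∀ x y : X, x ≠ y → edist x y ≤ R + R → κ x ≠ κ y)
    (a b : Fin K) (x : X) : partner E κ a b (partner E κ a b x) = x := by
  rcases partner_cases a b x (E := E) (κ := κ) with h | h
  · rw [h, h]
  · exact partner_eq hER hκ h.symm

lemma partner_eq_iff (hER : E ⊆ Tube X R)
    (hκ : ∀ x y : X, x ≠ y → edist x y ≤ R + R → κ x ≠ κ y)
    {a b : Fin K} {x y : X} : partner E κ a b y = x ↔ y = partner E κ a b x := by
  constructor
  · intro h
    have := congrArg (partner E κ a b) h
    rwa [partner_invol hER hκ] at this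
  · intro h
    rw [h, partner_invol hER hκ]

lemma matSupport_permMat (hER : E ⊆ Tube X R) (a b : Fin K) :
    matSupport (permMat E κ a b) ⊆ Tube X R := by
  intro p hp
  have hp' : permMat E κ a b p.1 p.2 ≠ 0 := hp
  have h : partner E κ a b p.2 = p.1 := by
    by_contra h
    exact hp' (by simp [permMat, h])
  show edist p.1 p.2 ≤ R
  rcases partner_cases a b p.2 (E := E) (κ := κ) with h2 | h2
  · rw [h2] at h
    rw [← h]
    simp
  · rw [h] at h2
    rw [edist_comm]
    exact h2.2.1.edist_le hER

lemma cuElem_permMat (hER : E ⊆ Tube X R) (hR : R < ⊤) (a b : Fin K) :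
    CuElem (permMat E κ a b) := by
  refine ⟨⟨1, fun x y => ?_⟩, ⟨R, hR, matSupport_permMat hER a b⟩⟩
  unfold permMat
  split_ifs <;> simp

lemma permMat_isPerm (hER : E ⊆ Tube X R) (hR : R < ⊤)
    (hκ : ∀ x y : X, x ≠ y → edist x y ≤ R + R → κ x ≠ κ y)
    (a b : Fin K) : IsPermMatrix (permMat E κ a b) := by
  have hone : ∀ x y : X, permMat E κ a b x y = 1 ↔ partner E κ a b y = x := by
    intro x y
    unfold permMat
    split_ifs with h
    · simp [h]
    · simp [h]
  refine ⟨fun x y => ?_, fun x => ?_, fun y => ?_, ⟨R, hR, matSupport_permMat hER a b⟩⟩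
  · unfold permMat; split_ifs <;> simp
  · refine ⟨partner E κ a b x, (hone _ _).2 (partner_invol hER hκ a b x), fun y hy => ?_⟩
    exact (partner_eq_iff hER hκ).1 ((hone _ _).1 hy)
  · exact ⟨partner E κ a b y, (hone _ _).2 rfl, fun x hx => ((hone _ _).1 hx).symm⟩

lemma matMul_permMat_apply (T : X → X → ℂ) (a b : Fin K) (x y : X) :
    matMul T (permMat E κ a b) x y = T x (partner E κ a b y) := by
  unfold matMul permMat
  rw [tsum_eq_single (partner E κ a b y)]
  · rw [if_pos rfl, mul_one]
  · intro z hz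
    rw [if_neg (fun hh => hz hh.symm), mul_zero]

lemma permMat_star_mul (hER : E ⊆ Tube X R)
    (hκ : ∀ x y : X, x ≠ y → edist x y ≤ R + R → κ x ≠ κ y)
    (a b : Fin K) :
    matMul (matStar (permMat E κ a b)) (permMat E κ a b) = matOne := by
  funext x y
  show ∑' z, starRingEnd ℂ (permMat E κ a b z x) * permMat E κ a b z y = matOne x y
  rw [tsum_eq_single (partner E κ a b x)]
  · unfold permMat matOne
    rw [if_pos rfl, map_one, one_mul]
    by_cases h : x = y
    · rw [if_pos (by rw [h]), if_pos h]
    · rw [if_neg, if_neg h]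
      intro hh
      exact h (by
        have := congrArg (partner E κ a b) hh
        rw [partner_invol hER hκ, partner_invol hER hκ] at this
        exact this.symm)
  · intro z hz
    unfold permMat
    rw [if_neg (fun hh => hz hh.symm), map_zero, zero_mul]
end Partner

section Decomposition

variable [EMetricSpace X] {K : ℕ}

/-- Indicator of the class of domain points `y` with `t y ≠ y`, `κ (t y) = a`, `κ y = b`. -/
def classFun (v : X → X → ℂ) (κ : X → Fin K) (a b : Fin K) : X → ℂ :=
  fun y => if ∃ x, v x y = 1 ∧ x ≠ y ∧ κ x = a ∧ κ y = b then 1 else 0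

/-- Indicator of the fixed points of the partial translation `v`. -/
def fixFun (v : X → X → ℂ) : X → ℂ := fun y => if v y y = 1 then 1 else 0

variable {E : Set (X × X)} {κ : X → Fin K} {R : ℝ≥0∞} {v : X → X → ℂ}

lemma classFun_eq_one {a b : Fin K} {y : X}
    (h : ∃ x, v x y = 1 ∧ x ≠ y ∧ κ x = a ∧ κ y = b) : classFun v κ a b y = 1 :=
  if_pos h

lemma classFun_eq_zero {a b : Fin K} {y : X}
    (h : ¬ ∃ x, v x y = 1 ∧ x ≠ y ∧ κ x = a ∧ κ y = b) : classFun v κ a b y = 0 :=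
  if_neg h

lemma fixFun_eq_one {y : X} (h : v y y = 1) : fixFun v y = 1 := if_pos h

lemma fixFun_eq_zero {y : X} (h : ¬ v y y = 1) : fixFun v y = 0 := if_neg h

lemma vmem (h1 : v x y = 1) : ((x, y) : X × X) ∈ matSupport v := by
  show v x y ≠ 0
  rw [h1]; exact one_ne_zero

lemma vQ (hsupp : matSupport v ⊆ E) {x y : X} (h1 : v x y = 1) (hxy : x ≠ y) :
    Qrel E κ (κ x) (κ y) y x :=
  ⟨Ne.symm hxy, Or.inr (hsupp (vmem h1)), Or.inr ⟨rfl, rfl⟩⟩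

lemma vQ' (hsupp : matSupport v ⊆ E) {x z : X} (h1 : v x z = 1) (hxz : x ≠ z) :
    Qrel E κ (κ x) (κ z) x z :=
  ⟨hxz, Or.inl (hsupp (vmem h1)), Or.inl ⟨rfl, rfl⟩⟩

lemma classFun_partner (hsupp : matSupport v ⊆ E) (hER : E ⊆ Tube X R)
    (hκ : ∀ x y : X, x ≠ y → edist x y ≤ R + R → κ x ≠ κ y)
    {a b : Fin K} {x : X}
    (h : ∃ x', v x' (partner E κ a b x) = 1 ∧ x' ≠ partner E κ a b x ∧
      κ x' = a ∧ κ (partner E κ a b x) = b) :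
    v x (partner E κ a b x) = 1 ∧ partner E κ a b x ≠ x ∧ κ x = a ∧
      κ (partner E κ a b x) = b := by
  obtain ⟨x', h1, h2, h3, h4⟩ := h
  have hQ : Qrel E κ a b (partner E κ a b x) x' :=
    ⟨Ne.symm h2, Or.inr (hsupp (vmem h1)), Or.inr ⟨h4, h3⟩⟩
  have hpw : partner E κ a b (partner E κ a b x) = x' := partner_eq hER hκ hQ
  have hinv : partner E κ a b (partner E κ a b x) = x := partner_invol hER hκ a b x
  have hx'x : x' = x := by rw [← hpw, hinv]
  subst hx'x
  exact ⟨h1, fun hc => h2 hc.symm, h3, h4⟩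

/-- Decomposition of a partial translation into permutation pieces. -/
lemma claim1 (hv : IsPartialTranslation v) (hsupp : matSupport v ⊆ E)
    (hER : E ⊆ Tube X R)
    (hκ : ∀ x y : X, x ≠ y → edist x y ≤ R + R → κ x ≠ κ y) :
    v = (∑ j : Fin K × Fin K,
        matMul (permMat E κ j.1 j.2) (diag (classFun v κ j.1 j.2))) + diag (fixFun v) := by
  funext x y
  simp only [Pi.add_apply, Finset.sum_apply, matMul_diag_apply, diag]
  by_cases h1 : v x y = 1
  · by_cases hxy : x = y
    · subst hxy
      have hsum : (∑ j : Fin K × Fin K,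
          permMat E κ j.1 j.2 x x * classFun v κ j.1 j.2 x) = 0 := by
        refine Finset.sum_eq_zero fun j _ => ?_
        rw [classFun_eq_zero, mul_zero]
        rintro ⟨x', hx'1, hx'2, -⟩
        exact hx'2 (hv.2.2.1 x' x x hx'1 h1)
      rw [hsum, if_pos rfl, fixFun_eq_one h1, h1, zero_add]
    · have hsum : (∑ j : Fin K × Fin K,
          permMat E κ j.1 j.2 x y * classFun v κ j.1 j.2 y) = 1 := by
        rw [Finset.sum_eq_single (κ x, κ y)]
        · have hp : partner E κ (κ x) (κ y) y = x := partner_eq hER hκ (vQ hsupp h1 hxy)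
          rw [classFun_eq_one ⟨x, h1, hxy, rfl, rfl⟩, mul_one]
          simp only [permMat]
          rw [if_pos hp]
        · intro j _ hj
          rw [classFun_eq_zero, mul_zero]
          rintro ⟨x', hx'1, hx'2, hx'3, hx'4⟩
          have hxx : x' = x := hv.2.2.1 x' x y hx'1 h1
          subst hxx
          exact hj (Prod.ext hx'3.symm hx'4.symm)
        · intro h; exact absurd (Finset.mem_univ _) h
      rw [hsum, if_neg hxy, h1, add_zero]
  · have h0 : v x y = 0 := (hv.1 x y).resolve_right h1
    have hsum : (∑ j : Fin K × Fin K,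
        permMat E κ j.1 j.2 x y * classFun v κ j.1 j.2 y) = 0 := by
      refine Finset.sum_eq_zero fun j _ => ?_
      by_cases hc : ∃ x', v x' y = 1 ∧ x' ≠ y ∧ κ x' = j.1 ∧ κ y = j.2
      · obtain ⟨x', hx'1, hx'2, hx'3, hx'4⟩ := hc
        have hp : partner E κ j.1 j.2 y = x' := by
          rw [← hx'3, ← hx'4]
          exact partner_eq hER hκ (vQ hsupp hx'1 hx'2)
        have hne : partner E κ j.1 j.2 y ≠ x := by
          rw [hp]
          intro hc2
          subst hc2
          exact h1 hx'1
        simp only [permMat]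
        rw [if_neg hne, zero_mul]
      · rw [classFun_eq_zero hc, mul_zero]
    rw [hsum, h0]
    by_cases hxy : x = y
    · subst hxy
      rw [if_pos rfl, fixFun_eq_zero h1, add_zero]
    · rw [if_neg hxy, add_zero]

lemma vvstar_eq (hv : IsPartialTranslation v) :
    matMul v (matStar v) = diag (fun x => if ∃ z, v x z = 1 then 1 else 0) := by
  funext x y
  show (∑' z, v x z * starRingEnd ℂ (v y z)) = _
  simp only [diag]
  by_cases hx : ∃ z, v x z = 1
  · obtain ⟨z0, hz0⟩ := hx
    rw [tsum_eq_single z0]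
    · rw [hz0, one_mul]
      by_cases hxy : x = y
      · subst hxy
        rw [hz0, map_one, if_pos rfl, if_pos ⟨z0, hz0⟩]
      · have hy0 : v y z0 = 0 := by
          rcases hv.1 y z0 with h | h
          · exact h
          · exact absurd (hv.2.2.1 x y z0 hz0 h) hxy
        rw [hy0, map_zero, if_neg hxy]
    · intro z hz
      have hvz : v x z = 0 := by
        rcases hv.1 x z with h | h
        · exact h
        · exact absurd (hv.2.1 x z z0 h hz0) hz
      rw [hvz, zero_mul]
  · have hzero : ∀ z, v x z = 0 := fun z => (hv.1 x z).resolve_right fun h => hx ⟨z, h⟩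
    have heq : (fun z => v x z * starRingEnd ℂ (v y z)) = fun _ => (0 : ℂ) :=
      funext fun z => by rw [hzero z, zero_mul]
    rw [heq, tsum_zero]
    by_cases hxy : x = y
    · rw [if_pos hxy, if_neg hx]
    · rw [if_neg hxy]

/-- Decomposition of `v v*` into the corresponding diagonal pieces. -/
lemma claim2 (hv : IsPartialTranslation v) (hsupp : matSupport v ⊆ E)
    (hER : E ⊆ Tube X R)
    (hκ : ∀ x y : X, x ≠ y → edist x y ≤ R + R → κ x ≠ κ y) :
    matMul v (matStar v) = (∑ j : Fin K × Fin K,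
        matMul (matMul (permMat E κ j.1 j.2) (diag (classFun v κ j.1 j.2)))
          (permMat E κ j.1 j.2)) + diag (fixFun v) := by
  rw [vvstar_eq hv]
  funext x y
  simp only [Pi.add_apply, Finset.sum_apply, matMul_permMat_apply, matMul_diag_apply, diag]
  have hterm : ∀ j : Fin K × Fin K,
      permMat E κ j.1 j.2 x (partner E κ j.1 j.2 y) = if y = x then 1 else 0 := by
    intro j
    simp only [permMat]
    rw [partner_invol hER hκ]
  simp only [hterm]
  by_cases hxy : x = y
  · subst hxy
    simp only [eq_self_iff_true, ite_true, one_mul]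
    by_cases hx : ∃ z, v x z = 1
    · obtain ⟨z0, hz0⟩ := hx
      rw [if_pos ⟨z0, hz0⟩]
      by_cases hz0x : z0 = x
      · have hxx : v x x = 1 := hz0x ▸ hz0
        have hsum : (∑ j : Fin K × Fin K,
            classFun v κ j.1 j.2 (partner E κ j.1 j.2 x)) = 0 := by
          refine Finset.sum_eq_zero fun j _ => ?_
          refine classFun_eq_zero fun hc => ?_
          obtain ⟨hw1, hw2, -, -⟩ := classFun_partner hsupp hER hκ hc
          exact hw2 (hv.2.1 x (partner E κ j.1 j.2 x) x hw1 hxx)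
        rw [hsum, fixFun_eq_one hxx, zero_add]
      · have hsum : (∑ j : Fin K × Fin K,
            classFun v κ j.1 j.2 (partner E κ j.1 j.2 x)) = 1 := by
          rw [Finset.sum_eq_single (κ x, κ z0)]
          · have hp : partner E κ (κ x) (κ z0) x = z0 :=
              partner_eq hER hκ (vQ' hsupp hz0 (fun h => hz0x h.symm))
            rw [hp]
            exact classFun_eq_one ⟨x, hz0, fun h => hz0x h.symm, rfl, rfl⟩
          · intro j _ hj
            refine classFun_eq_zero fun hc => ?_
            obtain ⟨hw1, hw2, hw3, hw4⟩ := classFun_partner hsupp hER hκ hc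
            have hwz : partner E κ j.1 j.2 x = z0 := hv.2.1 x _ z0 hw1 hz0
            rw [hwz] at hw4
            exact hj (Prod.ext hw3.symm hw4.symm)
          · intro h; exact absurd (Finset.mem_univ _) h
        rw [hsum, fixFun_eq_zero (fun hc => hz0x (hv.2.1 x z0 x hz0 hc)), add_zero]
    · rw [if_neg hx]
      have hsum : (∑ j : Fin K × Fin K,
          classFun v κ j.1 j.2 (partner E κ j.1 j.2 x)) = 0 := by
        refine Finset.sum_eq_zero fun j _ => ?_
        refine classFun_eq_zero fun hc => ?_
        exact hx ⟨partner E κ j.1 j.2 x, (classFun_partner hsupp hER hκ hc).1⟩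
      rw [hsum, fixFun_eq_zero (fun hc => hx ⟨x, hc⟩), zero_add]
  · have hyx : ¬ (y = x) := fun h => hxy h.symm
    rw [if_neg hxy, if_neg hxy]
    rw [Finset.sum_eq_zero (fun j _ => by rw [if_neg hyx, zero_mul]), zero_add]

end Decomposition

section Final

variable [EMetricSpace X]

lemma isPermMatrix_matOne : IsPermMatrix (matOne : X → X → ℂ) := by
  have hval : ∀ x y : X, matOne x y = 1 ↔ x = y := by
    intro x y
    unfold matOne
    split_ifs with h
    · simp [h]
    · simp [h]
  refine ⟨fun x y => ?_, fun x => ?_, fun y => ?_, ⟨0, by simp, fun p hp => ?_⟩⟩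
  · unfold matOne; split_ifs <;> simp
  · exact ⟨x, (hval x x).2 rfl, fun y hy => ((hval x y).1 hy).symm⟩
  · exact ⟨y, (hval y y).2 rfl, fun x hx => (hval x y).1 hx⟩
  · have hp' : matOne p.1 p.2 ≠ 0 := hp
    have h : p.1 = p.2 := by
      by_contra h
      exact hp' (by simp [matOne, h])
    show edist p.1 p.2 ≤ 0
    rw [h]
    simp

variable {E : Set (X × X)} {K : ℕ} {κ : X → Fin K} {R : ℝ≥0∞}

lemma cuElem_matMul_diagRight {T : X → X → ℂ} (hT : CuElem T) {f : X → ℂ}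
    (hf : ∀ x, ‖f x‖ ≤ 1) : CuElem (matMul T (diag f)) := by
  obtain ⟨⟨M, hM⟩, R', hR', hsup⟩ := hT
  refine ⟨⟨M, fun x y => ?_⟩, ⟨R', hR', fun p hp => ?_⟩⟩
  · rw [matMul_diag_apply, norm_mul]
    have h0 : (0:ℝ) ≤ M := le_trans (norm_nonneg _) (hM x y)
    calc ‖T x y‖ * ‖f y‖ ≤ M * 1 :=
          mul_le_mul (hM x y) (hf y) (norm_nonneg _) h0
      _ = M := mul_one M
  · have hp' : matMul T (diag f) p.1 p.2 ≠ 0 := hp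
    rw [matMul_diag_apply] at hp'
    have : T p.1 p.2 ≠ 0 := fun h => hp' (by rw [h, zero_mul])
    exact hsup this

lemma cuElem_AeA (hER : E ⊆ Tube X R)
    (hκ : ∀ x y : X, x ≠ y → edist x y ≤ R + R → κ x ≠ κ y)
    {a b : Fin K} {f : X → ℂ} (hf : ∀ x, ‖f x‖ ≤ 1) :
    CuElem (matMul (matMul (permMat E κ a b) (diag f)) (permMat E κ a b)) := by
  have hentry : ∀ x y : X, matMul (matMul (permMat E κ a b) (diag f)) (permMat E κ a b) x y
      = (if y = x then 1 else 0) * f (partner E κ a b y) := by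
    intro x y
    rw [matMul_permMat_apply, matMul_diag_apply]
    congr 1
    simp only [permMat]
    rw [partner_invol hER hκ]
  refine ⟨⟨1, fun x y => ?_⟩, ⟨0, by simp, fun p hp => ?_⟩⟩
  · rw [hentry, norm_mul]
    by_cases h : y = x
    · rw [if_pos h]
      simpa using hf _
    · rw [if_neg h]
      simp
  · have hp' : matMul (matMul (permMat E κ a b) (diag f)) (permMat E κ a b) p.1 p.2 ≠ 0 := hp
    rw [hentry] at hp'
    have h : p.2 = p.1 := by
      by_contra h
      rw [if_neg h, zero_mul] at hp'
      exact hp' rfl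
    show edist p.1 p.2 ≤ 0
    rw [h]
    simp

lemma zeroOne_abs_le {f : X → ℂ} (h : ∀ y, f y = 0 ∨ f y = 1) :
    ∀ y, ‖f y‖ ≤ 1 := by
  intro y
  rcases h y with h | h <;> rw [h] <;> simp

lemma classFun_zeroOne (v : X → X → ℂ) (a b : Fin K) :
    ∀ y, classFun v κ a b y = 0 ∨ classFun v κ a b y = 1 := by
  intro y
  unfold classFun
  split_ifs <;> simp

lemma fixFun_zeroOne (v : X → X → ℂ) :
    ∀ y, fixFun v y = 0 ∨ fixFun v y = 1 := by
  intro y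
  unfold fixFun
  split_ifs <;> simp

lemma diag_idem {f : X → ℂ} (h : ∀ y, f y = 0 ∨ f y = 1) :
    matMul (diag f) (diag f) = diag f := by
  rw [diag_matMul_diag]
  have heq : (fun x => f x * f x) = f :=
    funext fun x => by rcases h x with h' | h' <;> rw [h'] <;> ring
  rw [heq]

lemma diag_star {f : X → ℂ} (h : ∀ y, f y = 0 ∨ f y = 1) :
    matStar (diag f) = diag f := by
  refine matStar_diag f fun x => ?_
  rcases h x with h' | h' <;> rw [h'] <;> simp

end Final

/-- If the Kazhdan inequality with constant `c` holds for partial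
translations supported in a controlled set `E`, then there are finitely many
permutation matrices `A_1, …, A_n ∈ S_X` such that for every representation and
every `ξ ⊥ H^π`, some `A_j` satisfies `‖π(A_j)ξ - ξ‖ ≥ (c/n)‖ξ‖`. -/
theorem statement18 {X : Type*} [EMetricSpace X] (hX : IsSpace X)
    (E : Set (X × X)) (hE : Controlled E) (c : ℝ) (hc : 0 < c)
    (hyp : ∀ (H : Type) [NormedAddCommGroup H] [InnerProductSpace ℂ H] [CompleteSpace H]
      (π : (X → X → ℂ) → (H →L[ℂ] H)), IsRepresentation π →
      ∀ ξ ∈ (invariantSubmodule π)ᗮ,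
        ∃ v : X → X → ℂ, IsPartialTranslation v ∧ matSupport v ⊆ E ∧
          c * ‖ξ‖ ≤ ‖π v ξ - π (matMul v (matStar v)) ξ‖) :
    ∃ n : ℕ, 1 ≤ n ∧ ∃ A : Fin n → X → X → ℂ, (∀ j, IsPermMatrix (A j)) ∧
      ∀ (H : Type) [NormedAddCommGroup H] [InnerProductSpace ℂ H] [CompleteSpace H]
        (π : (X → X → ℂ) → (H →L[ℂ] H)), IsRepresentation π →
        ∀ ξ ∈ (invariantSubmodule π)ᗮ,
          ∃ j : Fin n, (c / n) * ‖ξ‖ ≤ ‖π (A j) ξ - ξ‖ := by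
  obtain ⟨R, hR, hER⟩ := hE
  have hcnt : Countable X := countable_of_bg hX.boundedGeometry hX.countableComponents
  have hRR : R + R < ⊤ := by
    rw [ENNReal.add_lt_top]
    exact ⟨hR, hR⟩
  obtain ⟨K, hK, κ, hκ⟩ := exists_coloring hX.boundedGeometry hcnt (R + R) hRR
  set n : ℕ := K * K + 1 with hn
  have hn1 : 1 ≤ n := Nat.succ_le_succ (Nat.zero_le _)
  set Afam : Fin n → X → X → ℂ := fun i =>
    if h : (i : ℕ) < K * K then
      permMat E κ (finProdFinEquiv.symm ⟨(i : ℕ), h⟩).1 (finProdFinEquiv.symm ⟨(i : ℕ), h⟩).2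
    else matOne with hAfam
  have hAfam_eq : ∀ j : Fin K × Fin K,
      Afam (Fin.castSucc (finProdFinEquiv j)) = permMat E κ j.1 j.2 := by
    intro j
    have hlt : ((Fin.castSucc (finProdFinEquiv j) : Fin n) : ℕ) < K * K := by
      simpa using (finProdFinEquiv j).isLt
    simp only [hAfam]
    rw [dif_pos hlt]
    have heq : (⟨((Fin.castSucc (finProdFinEquiv j) : Fin n) : ℕ), hlt⟩ : Fin (K * K))
        = finProdFinEquiv j := by
      apply Fin.ext
      simp
    rw [heq, Equiv.symm_apply_apply]
  refine ⟨n, hn1, Afam, ?_, ?_⟩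
  · intro i
    simp only [hAfam]
    split_ifs with h
    · exact permMat_isPerm hER hR hκ _ _
    · exact isPermMatrix_matOne
  · intro H _ _ _ π hπ ξ hξ
    by_cases hξ0 : ξ = 0
    · refine ⟨⟨0, hn1⟩, ?_⟩
      rw [hξ0]
      simp
    by_contra hcon
    push_neg at hcon
    obtain ⟨v, hv, hsupp, hlow⟩ := hyp H π hπ ξ hξ
    have habs : ∀ (a b : Fin K), ∀ y, ‖classFun v κ a b y‖ ≤ 1 :=
      fun a b => zeroOne_abs_le (classFun_zeroOne v a b)
    have hcuA : ∀ j : Fin K × Fin K, CuElem (permMat E κ j.1 j.2) :=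
      fun j => cuElem_permMat hER hR j.1 j.2
    have hcue : ∀ j : Fin K × Fin K, CuElem (diag (classFun v κ j.1 j.2)) :=
      fun j => cuElem_diag (habs j.1 j.2)
    have hcuF : ∀ j : Fin K × Fin K,
        CuElem (matMul (permMat E κ j.1 j.2) (diag (classFun v κ j.1 j.2))) :=
      fun j => cuElem_matMul_diagRight (hcuA j) (habs j.1 j.2)
    have hcuG : ∀ j : Fin K × Fin K,
        CuElem (matMul (matMul (permMat E κ j.1 j.2) (diag (classFun v κ j.1 j.2)))
          (permMat E κ j.1 j.2)) :=
      fun j => cuElem_AeA hER hκ (habs j.1 j.2)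
    have hcufix : CuElem (diag (fixFun v)) := cuElem_diag (zeroOne_abs_le (fixFun_zeroOne v))
    have h1 : π v ξ = (∑ j : Fin K × Fin K,
        π (matMul (permMat E κ j.1 j.2) (diag (classFun v κ j.1 j.2))) ξ)
          + π (diag (fixFun v)) ξ := by
      conv_lhs => rw [claim1 hv hsupp hER hκ]
      rw [hπ.map_add _ _ (cuElem_sum _ _ fun j _ => hcuF j) hcufix,
        pi_sum hπ _ _ fun j _ => hcuF j]
      simp only [ContinuousLinearMap.add_apply, ContinuousLinearMap.sum_apply]
    have h2 : π (matMul v (matStar v)) ξ = (∑ j : Fin K × Fin K,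
        π (matMul (matMul (permMat E κ j.1 j.2) (diag (classFun v κ j.1 j.2)))
          (permMat E κ j.1 j.2)) ξ) + π (diag (fixFun v)) ξ := by
      conv_lhs => rw [claim2 hv hsupp hER hκ]
      rw [hπ.map_add _ _ (cuElem_sum _ _ fun j _ => hcuG j) hcufix,
        pi_sum hπ _ _ fun j _ => hcuG j]
      simp only [ContinuousLinearMap.add_apply, ContinuousLinearMap.sum_apply]
    have hdiff : π v ξ - π (matMul v (matStar v)) ξ = ∑ j : Fin K × Fin K,
        (π (matMul (permMat E κ j.1 j.2) (diag (classFun v κ j.1 j.2))) ξ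
          - π (matMul (matMul (permMat E κ j.1 j.2) (diag (classFun v κ j.1 j.2)))
              (permMat E κ j.1 j.2)) ξ) := by
      rw [h1, h2, add_sub_add_right_eq_sub, ← Finset.sum_sub_distrib]
    have hterm : ∀ j : Fin K × Fin K,
        π (matMul (permMat E κ j.1 j.2) (diag (classFun v κ j.1 j.2))) ξ
          - π (matMul (matMul (permMat E κ j.1 j.2) (diag (classFun v κ j.1 j.2)))
              (permMat E κ j.1 j.2)) ξ
        = π (permMat E κ j.1 j.2)
            ((π (diag (classFun v κ j.1 j.2))) (ξ - π (permMat E κ j.1 j.2) ξ)) := by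
      intro j
      rw [hπ.map_mul _ _ (hcuF j) (hcuA j), hπ.map_mul _ _ (hcuA j) (hcue j)]
      simp only [ContinuousLinearMap.mul_apply]
      rw [← map_sub, ← map_sub]
    have hbound : ∀ j : Fin K × Fin K,
        ‖π (matMul (permMat E κ j.1 j.2) (diag (classFun v κ j.1 j.2))) ξ
          - π (matMul (matMul (permMat E κ j.1 j.2) (diag (classFun v κ j.1 j.2)))
              (permMat E κ j.1 j.2)) ξ‖ ≤ ‖π (permMat E κ j.1 j.2) ξ - ξ‖ := by
      intro j
      rw [hterm j, pi_isometry hπ (hcuA j) (permMat_star_mul hER hκ j.1 j.2)]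
      refine le_trans (pi_proj_norm_le hπ (hcue j)
        (diag_idem (classFun_zeroOne v j.1 j.2))
        (diag_star (classFun_zeroOne v j.1 j.2)) _) ?_
      rw [norm_sub_rev]
    have hkey : c * ‖ξ‖ ≤ ∑ j : Fin K × Fin K, ‖π (permMat E κ j.1 j.2) ξ - ξ‖ := by
      refine le_trans hlow ?_
      rw [hdiff]
      exact le_trans (norm_sum_le _ _) (Finset.sum_le_sum fun j _ => hbound j)
    haveI : Nonempty (Fin K × Fin K) := ⟨(⟨0, hK⟩, ⟨0, hK⟩)⟩
    have hnorm : 0 < ‖ξ‖ := norm_pos_iff.2 hξ0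
    have hlt : ∑ j : Fin K × Fin K, ‖π (permMat E κ j.1 j.2) ξ - ξ‖
        < ∑ _j : Fin K × Fin K, (c / n * ‖ξ‖) := by
      refine Finset.sum_lt_sum_of_nonempty Finset.univ_nonempty fun j _ => ?_
      rw [← hAfam_eq j]
      exact hcon _
    have hconst : ∑ _j : Fin K × Fin K, (c / n * ‖ξ‖) = ((K * K : ℕ) : ℝ) * (c / n * ‖ξ‖) := by
      rw [Finset.sum_const, Finset.card_univ]
      simp [nsmul_eq_mul]
    have hle : ((K * K : ℕ) : ℝ) * (c / n * ‖ξ‖) ≤ c * ‖ξ‖ := by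
      have hcast : ((n : ℕ) : ℝ) = ((K * K : ℕ) : ℝ) + 1 := by
        rw [hn]; push_cast; ring
      set t : ℝ := ((K * K : ℕ) : ℝ) with ht
      have ht0 : 0 ≤ t := Nat.cast_nonneg _
      have heq : t * (c / (n : ℝ) * ‖ξ‖) = t / (t + 1) * (c * ‖ξ‖) := by
        rw [hcast]; ring
      rw [heq]
      have h2 : t / (t + 1) ≤ 1 := by
        rw [div_le_one (by linarith)]
        linarith
      have h3 : 0 ≤ c * ‖ξ‖ := by positivity
      calc t / (t + 1) * (c * ‖ξ‖) ≤ 1 * (c * ‖ξ‖) :=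
            mul_le_mul_of_nonneg_right h2 h3
        _ = c * ‖ξ‖ := one_mul _
    exact absurd (lt_of_le_of_lt hkey (lt_of_lt_of_le (hlt.trans_eq hconst) hle))
      (lt_irrefl _)


end GeomPropT
end
end
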